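/- The CB-interpolating polynomial indexed by an integer partition λ, defined by so^{(2n+1)}_λ(x; β) := Σ_{ε ∈ {0,1}^n} β^{|ε|} sp^{(2n)}_{λ-ε}(x) (with sp^{(2n)}_μ := 0 when μ is not a partition), specializes at β = 0 to the symplectic character sp^{(2n)}_λ(x) and at β = 1 to the odd orthogonal character so^{(2n+1)}_λ(x); in particular so^{(2n+1)}_λ(x) = Σ_{ε∈{0,1}^n} sp^{(2n)}_{λ-ε}(x). -/

import Mathlib

open scoped Classical

/-- The symplectic character `sp^{(2n)}_μ(x)` of an integer vector `μ`, by its Weyl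
character formula when `μ` is a partition, and `0` otherwise (0-based: the 1-based
exponent `μ_i + n - i + 1` is `μ i + n - i`). -/
noncomputable def spCharZ (n : ℕ) (μ : Fin n → ℤ) (x : Fin n → ℝ) : ℝ :=
  if (∀ i j : Fin n, i ≤ j → μ j ≤ μ i) ∧ (∀ i, 0 ≤ μ i) then
    (Matrix.of fun i j : Fin n =>
        x j ^ (μ i + n - (i : ℕ)) - x j ^ (-(μ i + n - (i : ℕ)))).det /
    (Matrix.of fun i j : Fin n =>
        x j ^ ((n : ℤ) - (i : ℕ)) - x j ^ (-((n : ℤ) - (i : ℕ)))).det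
  else 0

/-- The CB-interpolating polynomial
`so^{(2n+1)}_λ(x; β) := Σ_{ε ∈ {0,1}^n} β^{|ε|} sp^{(2n)}_{λ-ε}(x)`. -/
noncomputable def cbPoly (n : ℕ) (lam : Fin n → ℕ) (x : Fin n → ℝ) (β : ℝ) : ℝ :=
  ∑ ε : Fin n → Bool,
    β ^ (Finset.univ.filter (fun i => ε i = true)).card *
      spCharZ n (fun i => (lam i : ℤ) - if ε i then 1 else 0) x

/-- The odd orthogonal character `so^{(2n+1)}_λ(x)` of an integer partition `λ`, by
its Weyl character formula (0-based: the 1-based exponent `λ_i + n - i + 1/2` is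
`λ i + n - i - 1/2`, a genuine half-integer, whence real powers of positive reals). -/
noncomputable def soOdd (n : ℕ) (lam : Fin n → ℕ) (x : Fin n → ℝ) : ℝ :=
  (Matrix.of fun i j : Fin n =>
      x j ^ ((lam i : ℝ) + n - (i : ℕ) - 1 / 2)
        - x j ^ (-((lam i : ℝ) + n - (i : ℕ) - 1 / 2))).det /
  (Matrix.of fun i j : Fin n =>
      x j ^ ((n : ℝ) - (i : ℕ) - 1 / 2) - x j ^ (-((n : ℝ) - (i : ℕ) - 1 / 2))).det


lemma key_entry {x : ℝ} (hx : 0 < x) (m : ℤ) :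
    (x ^ ((1:ℝ)/2) + x ^ (-(1/2) : ℝ)) * (x ^ ((m:ℝ) - 1/2) - x ^ (-((m:ℝ) - 1/2)))
      = (x ^ (m-1) - x ^ (-(m-1))) + (x ^ m - x ^ (-m)) := by
  have A : x ^ ((1:ℝ)/2) * x ^ ((m:ℝ) - 1/2) = x ^ m := by
    rw [← Real.rpow_add hx, ← Real.rpow_intCast x m]; congr 1; push_cast; ring
  have B : x ^ ((1:ℝ)/2) * x ^ (-((m:ℝ) - 1/2)) = x ^ (-(m-1)) := by
    rw [← Real.rpow_add hx, ← Real.rpow_intCast x (-(m-1))]; congr 1; push_cast; ring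
  have C : x ^ (-(1/2) : ℝ) * x ^ ((m:ℝ) - 1/2) = x ^ (m-1) := by
    rw [← Real.rpow_add hx, ← Real.rpow_intCast x (m-1)]; congr 1; push_cast; ring
  have D : x ^ (-(1/2) : ℝ) * x ^ (-((m:ℝ) - 1/2)) = x ^ (-m) := by
    rw [← Real.rpow_add hx, ← Real.rpow_intCast x (-m)]; congr 1; push_cast; ring
  calc (x ^ ((1:ℝ)/2) + x ^ (-(1/2) : ℝ)) * (x ^ ((m:ℝ) - 1/2) - x ^ (-((m:ℝ) - 1/2)))
      = (x ^ ((1:ℝ)/2) * x ^ ((m:ℝ) - 1/2) - x ^ ((1:ℝ)/2) * x ^ (-((m:ℝ) - 1/2)))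
        + (x ^ (-(1/2) : ℝ) * x ^ ((m:ℝ) - 1/2) - x ^ (-(1/2) : ℝ) * x ^ (-((m:ℝ) - 1/2))) := by
        ring
    _ = (x ^ (m-1) - x ^ (-(m-1))) + (x ^ m - x ^ (-m)) := by rw [A, B, C, D]; ring

lemma anti_of_adj {n : ℕ} {μ : Fin n → ℤ}
    (h : ∀ (k : ℕ) (hk : k + 1 < n), μ ⟨k+1, hk⟩ ≤ μ ⟨k, by omega⟩) :
    ∀ i j : Fin n, i ≤ j → μ j ≤ μ i := by
  have key : ∀ (d k : ℕ) (hk : k + d < n), μ ⟨k + d, hk⟩ ≤ μ ⟨k, by omega⟩ := by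
    intro d
    induction d with
    | zero => intro k hk; simp
    | succ d ih =>
        intro k hk
        exact le_trans (h (k+d) (by omega)) (ih k (by omega))
  intro i j hij
  have : (j : ℕ) = (i : ℕ) + ((j : ℕ) - (i : ℕ)) := by omega
  have hj : j = ⟨(i : ℕ) + ((j : ℕ) - (i : ℕ)), by omega⟩ := by
    apply Fin.ext; simpa using this
  rw [hj]
  exact key _ _ _

lemma detZero {n : ℕ} (lam : Fin n → ℕ) (hlam : Antitone lam) (ε : Fin n → Bool)
    (x : Fin n → ℝ)
    (hP : ¬ ((∀ i j : Fin n, i ≤ j →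
          ((lam j : ℤ) - (if ε j then 1 else 0)) ≤ (lam i : ℤ) - (if ε i then 1 else 0)) ∧
        (∀ i, 0 ≤ (lam i : ℤ) - (if ε i then 1 else 0)))) :
    (Matrix.of fun i j : Fin n =>
        x j ^ ((lam i : ℤ) + n - (i : ℕ) - (if ε i then 1 else 0))
          - x j ^ (-((lam i : ℤ) + n - (i : ℕ) - (if ε i then 1 else 0)))).det = 0 := by
  set t : Fin n → ℤ := fun i => if ε i then 1 else 0 with ht
  have hb : ∀ i, 0 ≤ t i ∧ t i ≤ 1 := by
    intro i; rw [ht]; dsimp only; split <;> omega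
  set μ : Fin n → ℤ := fun i => (lam i : ℤ) - t i with hμ
  by_cases hadj : ∃ (k : ℕ) (hk : k + 1 < n), μ ⟨k, by omega⟩ < μ ⟨k + 1, hk⟩
  · obtain ⟨k, hk, hlt⟩ := hadj
    have hl : lam ⟨k + 1, hk⟩ ≤ lam ⟨k, by omega⟩ := hlam (by simp [Fin.le_def])
    apply Matrix.det_zero_of_row_eq (i := (⟨k, by omega⟩ : Fin n)) (j := ⟨k + 1, hk⟩)
    · exact Fin.ne_of_val_ne (by simp)
    · funext j
      simp only [Matrix.of_apply]
      have hexp : (lam (⟨k, by omega⟩ : Fin n) : ℤ) + n - ((⟨k, by omega⟩ : Fin n) : ℕ)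
            - t ⟨k, by omega⟩
          = (lam (⟨k + 1, hk⟩ : Fin n) : ℤ) + n - ((⟨k + 1, hk⟩ : Fin n) : ℕ)
            - t ⟨k + 1, hk⟩ := by
        have b1 := hb ⟨k, by omega⟩
        have b2 := hb ⟨k + 1, hk⟩
        have h1 : μ ⟨k, by omega⟩ < μ ⟨k + 1, hk⟩ := hlt
        simp only [hμ, ht, Fin.val_mk] at h1 b1 b2 ⊢
        omega
      rw [hexp]
  · have hmono : ∀ i j : Fin n, i ≤ j → μ j ≤ μ i := by
      apply anti_of_adj
      intro k hk
      by_contra hc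
      exact hadj ⟨k, hk, by omega⟩
    have hex : ∃ i, μ i < 0 := by
      by_contra hc
      push_neg at hc
      exact hP ⟨fun i j hij => hmono i j hij, fun i => hc i⟩
    obtain ⟨i0, hi0⟩ := hex
    have hn : 0 < n := i0.pos
    set L : Fin n := ⟨n - 1, by omega⟩ with hL
    have hL0 : μ L < 0 := lt_of_le_of_lt (hmono i0 L (by rw [Fin.le_def, hL]; show (i0 : ℕ) ≤ n - 1; have := i0.isLt; omega)) hi0
    apply Matrix.det_eq_zero_of_row_eq_zero L
    intro j
    simp only [Matrix.of_apply]
    have hexp : (lam L : ℤ) + n - (L : ℕ) - t L = 0 := by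
      have b1 := hb L
      simp only [hμ, ht, hL, Fin.val_mk] at hL0 b1 ⊢
      omega
    rw [hexp]
    simp

noncomputable def boolSetEquiv (n : ℕ) : (Fin n → Bool) ≃ Finset (Fin n) where
  toFun ε := Finset.univ.filter (fun i => ε i = true)
  invFun s := fun i => decide (i ∈ s)
  left_inv ε := by funext i; simp
  right_inv s := by ext i; simp

lemma soNum_expand (n : ℕ) (lam : Fin n → ℕ) (x : Fin n → ℝ) (hx : ∀ i, 0 < x i) :
    ((∏ j, (x j ^ ((1:ℝ)/2) + x j ^ (-(1/2) : ℝ))) *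
      (Matrix.of fun i j : Fin n =>
        x j ^ ((lam i : ℝ) + n - (i : ℕ) - 1/2)
          - x j ^ (-((lam i : ℝ) + n - (i : ℕ) - 1/2))).det)
    = ∑ ε : Fin n → Bool,
        (Matrix.of fun i j : Fin n =>
          x j ^ ((lam i : ℤ) + n - (i : ℕ) - (if ε i then 1 else 0))
            - x j ^ (-((lam i : ℤ) + n - (i : ℕ) - (if ε i then 1 else 0)))).det := by
  set A : Matrix (Fin n) (Fin n) ℝ := Matrix.of fun i j =>
    x j ^ ((lam i : ℤ) + n - (i : ℕ) - 1) - x j ^ (-((lam i : ℤ) + n - (i : ℕ) - 1)) with hA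
  set B : Matrix (Fin n) (Fin n) ℝ := Matrix.of fun i j =>
    x j ^ ((lam i : ℤ) + n - (i : ℕ)) - x j ^ (-((lam i : ℤ) + n - (i : ℕ))) with hB
  have step1 : ((∏ j, (x j ^ ((1:ℝ)/2) + x j ^ (-(1/2) : ℝ))) *
      (Matrix.of fun i j : Fin n =>
        x j ^ ((lam i : ℝ) + n - (i : ℕ) - 1/2)
          - x j ^ (-((lam i : ℝ) + n - (i : ℕ) - 1/2))).det) = (A + B).det := by
    rw [← Matrix.det_mul_row]
    congr 1
    ext i j
    simp only [Matrix.of_apply, Matrix.add_apply, hA, hB]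
    have hc : ((((lam i : ℤ) + n - (i : ℕ) : ℤ) : ℝ)) - 1/2
        = (lam i : ℝ) + n - (i : ℕ) - 1/2 := by push_cast; ring
    rw [← hc]
    exact key_entry (hx j) ((lam i : ℤ) + n - (i : ℕ))
  rw [step1]
  have step2 : (A + B).det = ∑ s : Finset (Fin n), Matrix.det (s.piecewise A B) :=
    MultilinearMap.map_add_univ
      (Matrix.detRowAlternating (R := ℝ) (n := Fin n)).toMultilinearMap A B
  rw [step2]
  refine (Fintype.sum_equiv (boolSetEquiv n) _ _ ?_).symm
  intro ε
  congr 1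
  funext i j
  by_cases h : ε i
  · have : i ∈ boolSetEquiv n ε := by simp [boolSetEquiv, h]
    simp only [Finset.piecewise, if_pos this, hA, Matrix.of_apply, h, if_pos]
  · have : i ∉ boolSetEquiv n ε := by simp [boolSetEquiv, h]
    simp only [Finset.piecewise, if_neg this, hB, Matrix.of_apply, h, if_neg, if_false]
    norm_num

lemma soDen_eq (n : ℕ) (x : Fin n → ℝ) (hx : ∀ i, 0 < x i) :
    ((∏ j, (x j ^ ((1:ℝ)/2) + x j ^ (-(1/2) : ℝ))) *
      (Matrix.of fun i j : Fin n =>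
        x j ^ ((n : ℝ) - (i : ℕ) - 1 / 2) - x j ^ (-((n : ℝ) - (i : ℕ) - 1 / 2))).det)
    = (Matrix.of fun i j : Fin n =>
        x j ^ ((n : ℤ) - (i : ℕ)) - x j ^ (-((n : ℤ) - (i : ℕ)))).det := by
  have h := soNum_expand n (fun _ => 0) x hx
  simp only [Nat.cast_zero, CharP.cast_eq_zero, zero_add] at h
  rw [h]
  rw [Finset.sum_eq_single (fun _ => false)]
  · congr 1; funext i j
    simp only [Matrix.of_apply, if_neg (by simp : ¬ (false = true))]
    norm_num
  · intro ε _ hne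
    have hex : ∃ i, ε i = true := by
      by_contra hc
      push_neg at hc
      exact hne (funext fun i => by simpa using hc i)
    have h0 := detZero (fun _ => 0) antitone_const ε x (by
      rintro ⟨-, h2⟩
      obtain ⟨i, hi⟩ := hex
      have := h2 i
      simp [hi] at this)
    simpa using h0
  · intro h; exact absurd (Finset.mem_univ _) h

lemma main_id (n : ℕ) (lam : Fin n → ℕ) (hlam : Antitone lam)
    (x : Fin n → ℝ) (hx : ∀ i, 0 < x i) :
    soOdd n lam x
      = ∑ ε : Fin n → Bool,
          spCharZ n (fun i => (lam i : ℤ) - if ε i then 1 else 0) x := by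
  have hc : (0:ℝ) < ∏ j, (x j ^ ((1:ℝ)/2) + x j ^ (-(1/2) : ℝ)) := by
    apply Finset.prod_pos
    intro j _
    have := hx j
    positivity
  unfold soOdd
  rw [← mul_div_mul_left _ _ (ne_of_gt hc), soNum_expand n lam x hx, soDen_eq n x hx,
    Finset.sum_div]
  apply Finset.sum_congr rfl
  intro ε _
  rw [spCharZ]
  by_cases hP : (∀ i j : Fin n, i ≤ j →
        ((lam j : ℤ) - (if ε j then 1 else 0)) ≤ (lam i : ℤ) - (if ε i then 1 else 0)) ∧
      (∀ i, 0 ≤ (lam i : ℤ) - (if ε i then 1 else 0))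
  · rw [if_pos hP]
    have he : ∀ i : Fin n, (lam i : ℤ) + n - (i : ℕ) - (if ε i then 1 else 0)
        = ((lam i : ℤ) - (if ε i then 1 else 0)) + n - (i : ℕ) := fun i => by ring
    simp only [he]
  · rw [if_neg hP, detZero lam hlam ε x hP, zero_div]

/-- the CB-interpolating polynomial specializes at `β = 0` to the
symplectic character, at `β = 1` to the odd orthogonal character; in particular
`so^{(2n+1)}_λ(x) = Σ_{ε ∈ {0,1}^n} sp^{(2n)}_{λ-ε}(x)` (Proctor–Sundaram). -/
theorem cbPoly_specializations (n : ℕ) (lam : Fin n → ℕ) (hlam : Antitone lam)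
    (x : Fin n → ℝ) (hx : ∀ i, 0 < x i) :
    cbPoly n lam x 0 = spCharZ n (fun i => (lam i : ℤ)) x ∧
    cbPoly n lam x 1 = soOdd n lam x ∧
    soOdd n lam x
      = ∑ ε : Fin n → Bool,
          spCharZ n (fun i => (lam i : ℤ) - if ε i then 1 else 0) x := by
  have h3 := main_id n lam hlam x hx
  refine ⟨?_, ?_, h3⟩
  · rw [cbPoly, Finset.sum_eq_single (fun _ => false)]
    · norm_num
    · intro ε _ hne
      have hex : ∃ i, ε i = true := by
        by_contra hc
        push_neg at hc
        exact hne (funext fun i => by simpa using hc i)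
      obtain ⟨i, hi⟩ := hex
      have hcard : 0 < (Finset.univ.filter (fun i => ε i = true)).card :=
        Finset.card_pos.mpr ⟨i, by simp [hi]⟩
      rw [zero_pow (by omega), zero_mul]
    · intro h; exact absurd (Finset.mem_univ _) h
  · rw [cbPoly]
    simp only [one_pow, one_mul]
    exact h3.symm
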